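/- Let f(z) = ∑_{n≥1} a_n e^{2πinz} be holomorphic on the upper half-plane with the series absolutely convergent. For a prime p and even integer k, the identity f|[[p,0],[0,1]] + ∑_{a=0}^{p-1} f|[[1,a],[0,p]] = a_p · p^{1-k/2} · f holds (with the weight-k stroke operator) if and only if a_{pn} - a_p·a_n + p^{k-1} a_{n/p} = 0 for all n ≥ 1 (with a_x = 0 when x is not a positive integer). -/

import Mathlib

open Complex Real


lemma coeff_unique (c : ℕ → ℂ)
    (hs : ∀ z : ℂ, 0 < z.im → Summable fun n : ℕ => ‖c n * Complex.exp (2 * π * I * n * z)‖)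
    (h0 : ∀ z : ℂ, 0 < z.im → ∑' n : ℕ, c n * Complex.exp (2 * π * I * n * z) = 0) :
    ∀ n, c n = 0 := by
  have hexp : ∀ (t : ℝ) (n : ℕ),
      Complex.exp (2 * π * I * n * ((t : ℂ) * I)) = ((Real.exp (-(2 * π * n * t)) : ℝ) : ℂ) := by
    intro t n
    have h1 : (2 * (π : ℂ) * I * (n : ℂ) * ((t : ℂ) * I)) = ((-(2 * π * n * t) : ℝ) : ℂ) := by
      have h2 : (I : ℂ) * I = -1 := Complex.I_mul_I
      push_cast
      linear_combination (2 * (π : ℂ) * n * t) * h2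
    rw [h1]
    exact (Complex.ofReal_exp _).symm
  have keyS : ∀ t : ℝ, 0 < t → Summable fun n : ℕ => ‖c n‖ * Real.exp (-(2 * π * n * t)) := by
    intro t ht
    refine (hs ((t : ℂ) * I) (by simpa using ht)).congr fun n => ?_
    rw [norm_mul, hexp t n, Complex.norm_real, Real.norm_of_nonneg (Real.exp_pos _).le]
  have key : ∀ t : ℝ, 0 < t →
      ∑' n : ℕ, c n * ((Real.exp (-(2 * π * n * t)) : ℝ) : ℂ) = 0 := by
    intro t ht
    rw [← h0 ((t : ℂ) * I) (by simpa using ht)]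
    exact tsum_congr fun n => by rw [hexp t n]
  have step : ∀ N : ℕ, (∀ m, m < N → c m = 0) → c N = 0 := by
    intro N ih
    have hCsum : Summable fun m : ℕ =>
        ‖c (m + (N + 1))‖ * Real.exp (-(2 * π * ((m + (N + 1) : ℕ) : ℝ) * 1)) :=
      (summable_nat_add_iff (f := fun n : ℕ => ‖c n‖ * Real.exp (-(2 * π * n * 1))) (N + 1)).2
        (keyS 1 one_pos)
    set C : ℝ := ∑' m : ℕ, ‖c (m + (N + 1))‖ * Real.exp (-(2 * π * ((m + (N + 1) : ℕ) : ℝ) * 1))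
      with hC
    have hC0 : 0 ≤ C := tsum_nonneg fun m =>
      mul_nonneg (norm_nonneg _) (Real.exp_pos _).le
    have main : ∀ t : ℝ, 1 ≤ t →
        ‖c N‖ ≤ (C * Real.exp (2 * π * (N + 1))) * Real.exp (-(2 * π * t)) := by
      intro t ht
      have ht0 : (0 : ℝ) < t := lt_of_lt_of_le one_pos ht
      set F : ℕ → ℂ := fun n => c n * ((Real.exp (-(2 * π * n * t)) : ℝ) : ℂ) with hF
      have hFnorm : ∀ n : ℕ, ‖F n‖ = ‖c n‖ * Real.exp (-(2 * π * n * t)) := by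
        intro n
        rw [hF, norm_mul, Complex.norm_real, Real.norm_of_nonneg (Real.exp_pos _).le]
      have SF : Summable F := Summable.of_norm ((keyS t ht0).congr fun n => (hFnorm n).symm)
      have h1 : ∑' m : ℕ, F (m + N) = 0 := by
        have h := Summable.sum_add_tsum_nat_add (f := F) N SF
        rw [key t ht0] at h
        have hz : ∑ i ∈ Finset.range N, F i = 0 := by
          refine Finset.sum_eq_zero fun i hi => ?_
          simp [hF, ih i (Finset.mem_range.mp hi)]
        linear_combination h - hz
      have hS1 : Summable fun m : ℕ => F (m + N) := (summable_nat_add_iff N).2 SF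
      have h2 : F N = -∑' m : ℕ, F (m + 1 + N) := by
        have h := Summable.tsum_eq_zero_add hS1
        rw [h1] at h
        simp only [zero_add] at h
        linear_combination -h
      have hS2 : Summable fun m : ℕ => F (m + 1 + N) := by
        have := (summable_nat_add_iff 1).2 hS1
        exact this.congr fun m => rfl
      have hS2n : Summable fun m : ℕ => ‖F (m + 1 + N)‖ := by
        refine Summable.of_nonneg_of_le (fun m => norm_nonneg _) (fun m => le_refl _) ?_
        exact ((summable_nat_add_iff (N + 1)).2 ((keyS t ht0))).congr fun m => by
          rw [hFnorm]; congr 2 <;> [skip; ring_nf] <;> congr 1 <;> omega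
      have term : ∀ m : ℕ, ‖F (m + 1 + N)‖ ≤
          Real.exp (-(2 * π * (N + 1) * (t - 1))) *
            (‖c (m + (N + 1))‖ * Real.exp (-(2 * π * ((m + (N + 1) : ℕ) : ℝ) * 1))) := by
        intro m
        have hmn : (m + 1 + N) = (m + (N + 1)) := by omega
        rw [hmn, hFnorm]
        have hexp_le : Real.exp (-(2 * π * ((m + (N + 1) : ℕ) : ℝ) * t)) ≤
            Real.exp (-(2 * π * (N + 1) * (t - 1))) *
              Real.exp (-(2 * π * ((m + (N + 1) : ℕ) : ℝ) * 1)) := by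
          rw [← Real.exp_add, Real.exp_le_exp]
          have hM : ((N : ℝ) + 1) ≤ ((m + (N + 1) : ℕ) : ℝ) := by
            push_cast
            linarith [Nat.cast_nonneg (α := ℝ) m]
          have ht1 : (0 : ℝ) ≤ t - 1 := by linarith
          have h6 : ((N : ℝ) + 1) * (t - 1) ≤ ((m + (N + 1) : ℕ) : ℝ) * (t - 1) :=
            mul_le_mul_of_nonneg_right hM ht1
          have h7 := mul_le_mul_of_nonneg_left h6 (by positivity : (0:ℝ) ≤ 2 * π)
          nlinarith [h7]
        refine le_trans (mul_le_mul_of_nonneg_left hexp_le (norm_nonneg _)) (le_of_eq ?_)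
        ring
      have h3 : ‖F N‖ ≤ ∑' m : ℕ, ‖F (m + 1 + N)‖ := by
        rw [h2, norm_neg]
        exact norm_tsum_le_tsum_norm hS2n
      have h4 : ∑' m : ℕ, ‖F (m + 1 + N)‖ ≤ Real.exp (-(2 * π * (N + 1) * (t - 1))) * C := by
        rw [hC, ← tsum_mul_left]
        exact Summable.tsum_le_tsum term hS2n (hCsum.mul_left _)
      have h5 : ‖c N‖ * Real.exp (-(2 * π * N * t)) ≤ Real.exp (-(2 * π * (N + 1) * (t - 1))) * C := by
        rw [← hFnorm]
        exact h3.trans h4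
      calc ‖c N‖ = (‖c N‖ * Real.exp (-(2 * π * N * t))) * Real.exp (2 * π * N * t) := by
            rw [mul_assoc, ← Real.exp_add]; simp
        _ ≤ (Real.exp (-(2 * π * (N + 1) * (t - 1))) * C) * Real.exp (2 * π * N * t) :=
            mul_le_mul_of_nonneg_right h5 (Real.exp_pos _).le
        _ = (C * Real.exp (2 * π * (N + 1))) * Real.exp (-(2 * π * t)) := by
            have he : Real.exp (-(2 * π * (N + 1) * (t - 1))) * Real.exp (2 * π * N * t)
                = Real.exp (2 * π * (N + 1)) * Real.exp (-(2 * π * t)) := by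
              rw [← Real.exp_add, ← Real.exp_add]
              congr 1
              ring
            linear_combination C * he
    have htend : Filter.Tendsto
        (fun t : ℝ => (C * Real.exp (2 * π * (N + 1))) * Real.exp (-(2 * π * t)))
        Filter.atTop (nhds 0) := by
      rw [show (0 : ℝ) = (C * Real.exp (2 * π * (N + 1))) * 0 by ring]
      refine Filter.Tendsto.const_mul _ ?_
      exact Real.tendsto_exp_neg_atTop_nhds_zero.comp
        (Filter.Tendsto.const_mul_atTop (by positivity) Filter.tendsto_id)
    have hfin : ‖c N‖ ≤ 0 := ge_of_tendsto htend (Filter.eventually_atTop.2 ⟨1, main⟩)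
    exact norm_le_zero_iff.mp hfin
  intro n
  induction n using Nat.strong_induction_on with
  | _ n ih => exact step n ih


lemma zeta_sum (p : ℕ) (hp : p.Prime) (n : ℕ) :
    ∑ j ∈ Finset.range p, Complex.exp (2 * π * I * n / p) ^ j
      = if p ∣ n then (p : ℂ) else 0 := by
  have hp0 : (p : ℂ) ≠ 0 := Nat.cast_ne_zero.2 hp.pos.ne'
  by_cases hd : p ∣ n
  · obtain ⟨m, rfl⟩ := hd
    have h1 : (2 * (π : ℂ) * I * (p * m : ℕ) / p) = (m : ℤ) * (2 * π * I) := by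
      push_cast
      field_simp
    rw [h1, Complex.exp_int_mul_two_pi_mul_I, if_pos ⟨m, rfl⟩]
    simp
  · have hpi : (2 * (π : ℂ) * I) ≠ 0 := by
      simp [Complex.I_ne_zero, Real.pi_ne_zero, Complex.ofReal_ne_zero]
    have hz1 : Complex.exp (2 * π * I * n / p) ≠ 1 := by
      intro h
      rw [Complex.exp_eq_one_iff] at h
      obtain ⟨m, hm⟩ := h
      apply hd
      have hnm : (n : ℂ) = (m : ℂ) * p := by
        field_simp at hm
        have := hm
        -- hm : 2 * π * I * n = m * (2 * π * I) * p  (roughly)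
        have h2 : (2 * (π:ℂ) * I) * (n : ℂ) = (2 * (π:ℂ) * I) * ((m : ℂ) * p) := by
          linear_combination (2 * (π:ℂ) * I) * hm
        exact mul_left_cancel₀ hpi h2
      have hnm2 : (n : ℤ) = m * p := by exact_mod_cast hnm
      exact Int.natCast_dvd_natCast.mp ⟨m, by push_cast; linarith⟩
    rw [geom_sum_eq hz1, if_neg hd]
    have hzp : Complex.exp (2 * π * I * n / p) ^ p = 1 := by
      rw [← Complex.exp_nat_mul]
      have h3 : (p : ℂ) * (2 * π * I * n / p) = (n : ℤ) * (2 * π * I) := by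
        push_cast
        field_simp
      rw [h3, Complex.exp_int_mul_two_pi_mul_I]
    rw [hzp]
    simp

/-- Let `f(z) = ∑_{n≥1} aₙ e^{2πinz}`, holomorphic on the upper half-plane with the
series absolutely convergent.  For a prime `p` and positive even integer `k`, the
stroke identity `f|[[p,0],[0,1]] + ∑_{j=0}^{p-1} f|[[1,j],[0,p]] = a_p·p^{1-k/2}·f`
holds if and only if `a_{pn} - a_p·aₙ + p^{k-1} a_{n/p} = 0` for all `n ≥ 1`
(with `a_x = 0` when `x` is not a positive integer). -/
theorem hecke_operator_iff_recursion (p : ℕ) (hp : p.Prime)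
    (k : ℕ) (hk : 0 < k) (hke : Even k)
    (a : ℕ → ℂ) (ha0 : a 0 = 0) (f : ℂ → ℂ)
    (hsum : ∀ z : ℂ, 0 < z.im →
      Summable fun n : ℕ => ‖a n * Complex.exp (2 * π * I * n * z)‖)
    (hf : ∀ z : ℂ, 0 < z.im → f z = ∑' n : ℕ, a n * Complex.exp (2 * π * I * n * z))
    (hholo : DifferentiableOn ℂ f {z : ℂ | 0 < z.im}) :
    (∀ z : ℂ, 0 < z.im →
        (p : ℂ) ^ ((k : ℤ) / 2) * f (p * z)
          + (p : ℂ) ^ ((k : ℤ) / 2 - k) * ∑ j ∈ Finset.range p, f ((z + j) / p)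
        = a p * (p : ℂ) ^ (1 - (k : ℤ) / 2) * f z) ↔
    (∀ n : ℕ, 1 ≤ n →
        a (p * n) - a p * a n + (p : ℂ) ^ (k - 1) * (if p ∣ n then a (n / p) else 0) = 0) := by
  have hp0 : (p : ℂ) ≠ 0 := Nat.cast_ne_zero.2 hp.pos.ne'
  obtain ⟨r, hr⟩ := hke
  have hk2 : (k : ℤ) = r + r := by exact_mod_cast hr
  have hpow : (p : ℂ) ^ ((k : ℤ) / 2 - k) * (p : ℂ) = (p : ℂ) ^ (1 - (k : ℤ) / 2) := by
    have h := zpow_add₀ hp0 ((k : ℤ) / 2 - k) 1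
    rw [zpow_one] at h
    rw [← h]
    congr 1
    omega
  have hinj : Function.Injective (fun n : ℕ => p * n) := fun x y h => by
    simpa using Nat.eq_of_mul_eq_mul_left hp.pos h
  have hppos : (0 : ℝ) < (p : ℝ) := by exact_mod_cast hp.pos
  have him1 : ∀ z : ℂ, 0 < z.im → 0 < ((p : ℂ) * z).im := by
    intro z hz
    rw [Complex.mul_im]
    simp only [Complex.natCast_re, Complex.natCast_im, zero_mul, add_zero]
    exact mul_pos hppos hz
  have him2 : ∀ (z : ℂ) (j : ℕ), 0 < z.im → 0 < ((z + (j : ℂ)) / (p : ℂ)).im := by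
    intro z j hz
    rw [Complex.div_im]
    simp only [Complex.add_im, Complex.natCast_im, add_zero, Complex.natCast_re,
      Complex.normSq_natCast, mul_zero, zero_div, sub_zero]
    exact div_pos (mul_pos hz hppos) (mul_pos hppos hppos)
  have him3 : ∀ z : ℂ, 0 < z.im → 0 < (z / (p : ℂ)).im := by
    intro z hz
    rw [Complex.div_im]
    simp only [Complex.natCast_im, Complex.natCast_re, Complex.normSq_natCast, mul_zero,
      zero_div, sub_zero]
    exact div_pos (mul_pos hz hppos) (mul_pos hppos hppos)
  -- the coefficient sequence
  set c : ℕ → ℂ := fun m =>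
    (p : ℂ) ^ ((k : ℤ) / 2) * (if p ∣ m then a (m / p) else 0)
      + (p : ℂ) ^ (1 - (k : ℤ) / 2) * a (p * m)
      - a p * (p : ℂ) ^ (1 - (k : ℤ) / 2) * a m with hc
  -- exponential argument identities
  have harg1 : ∀ (n : ℕ) (z : ℂ), Complex.exp (2 * π * I * ((p * n : ℕ) : ℂ) * z)
      = Complex.exp (2 * π * I * (n : ℂ) * ((p : ℂ) * z)) := by
    intro n z
    congr 1
    push_cast
    ring
  have harg2 : ∀ (n : ℕ) (z : ℂ), Complex.exp (2 * π * I * ((p * n : ℕ) : ℂ) * (z / (p : ℂ)))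
      = Complex.exp (2 * π * I * (n : ℂ) * z) := by
    intro n z
    congr 1
    push_cast
    field_simp
  -- term-level identity for the first piece
  have hg1 : ∀ (n : ℕ) (z : ℂ),
      (p : ℂ) ^ ((k : ℤ) / 2) * (if p ∣ p * n then a ((p * n) / p) else 0)
          * Complex.exp (2 * π * I * ((p * n : ℕ) : ℂ) * z)
        = (p : ℂ) ^ ((k : ℤ) / 2) * (a n * Complex.exp (2 * π * I * (n : ℂ) * ((p : ℂ) * z))) := by
    intro n z
    rw [if_pos (Dvd.intro n rfl), Nat.mul_div_cancel_left n hp.pos, harg1]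
    ring
  -- summability of the three reshaped series
  have S1 : ∀ z : ℂ, 0 < z.im → Summable fun m : ℕ =>
      (p : ℂ) ^ ((k : ℤ) / 2) * (if p ∣ m then a (m / p) else 0)
        * Complex.exp (2 * π * I * (m : ℂ) * z) := by
    intro z hz
    refine (Function.Injective.summable_iff hinj ?_).mp ?_
    · intro m hm
      have hdvd : ¬ p ∣ m := fun ⟨q, hq⟩ => hm ⟨q, hq.symm⟩
      simp [hdvd]
    · refine (((hsum _ (him1 z hz)).of_norm.mul_left ((p : ℂ) ^ ((k : ℤ) / 2))).congr
        fun n => ?_)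
      exact (hg1 n z).symm
  have S2 : ∀ z : ℂ, 0 < z.im → Summable fun m : ℕ =>
      a (p * m) * Complex.exp (2 * π * I * (m : ℂ) * z) := by
    intro z hz
    have h := ((hsum (z / (p : ℂ)) (him3 z hz)).of_norm).comp_injective hinj
    refine h.congr fun m => ?_
    simp only [Function.comp]
    rw [harg2]
  have S3 : ∀ z : ℂ, 0 < z.im → Summable fun m : ℕ =>
      a m * Complex.exp (2 * π * I * (m : ℂ) * z) := fun z hz => (hsum z hz).of_norm
  -- first piece
  have T1 : ∀ z : ℂ, 0 < z.im → (p : ℂ) ^ ((k : ℤ) / 2) * f ((p : ℂ) * z)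
      = ∑' m : ℕ, (p : ℂ) ^ ((k : ℤ) / 2) * (if p ∣ m then a (m / p) else 0)
          * Complex.exp (2 * π * I * (m : ℂ) * z) := by
    intro z hz
    rw [hf _ (him1 z hz), ← tsum_mul_left]
    refine Eq.trans (tsum_congr (f := fun n : ℕ => (p : ℂ) ^ ((k : ℤ) / 2)
        * (a n * Complex.exp (2 * π * I * (n : ℂ) * ((p : ℂ) * z))))
      (g := fun n : ℕ => (p : ℂ) ^ ((k : ℤ) / 2) * (if p ∣ p * n then a ((p * n) / p) else 0)
        * Complex.exp (2 * π * I * ((p * n : ℕ) : ℂ) * z))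
      fun n => (hg1 n z).symm) ?_
    refine Function.Injective.tsum_eq (f := fun m : ℕ => (p : ℂ) ^ ((k : ℤ) / 2)
        * (if p ∣ m then a (m / p) else 0)
        * Complex.exp (2 * π * I * (m : ℂ) * z)) hinj ?_
    intro m hm
    rcases em (p ∣ m) with ⟨q, rfl⟩ | hdvd
    · exact ⟨q, rfl⟩
    · exfalso
      apply hm
      simp [hdvd]
  -- second piece
  have T2 : ∀ z : ℂ, 0 < z.im →
      (p : ℂ) ^ ((k : ℤ) / 2 - k) * ∑ j ∈ Finset.range p, f ((z + (j : ℂ)) / (p : ℂ))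
      = ∑' m : ℕ, (p : ℂ) ^ (1 - (k : ℤ) / 2)
          * (a (p * m) * Complex.exp (2 * π * I * (m : ℂ) * z)) := by
    intro z hz
    have hstep : ∑ j ∈ Finset.range p, f ((z + (j : ℂ)) / (p : ℂ))
        = (p : ℂ) * ∑' m : ℕ, a (p * m) * Complex.exp (2 * π * I * (m : ℂ) * z) := by
      have hsum_j : ∀ j ∈ Finset.range p, Summable fun n : ℕ =>
          a n * Complex.exp (2 * π * I * (n : ℂ) * ((z + (j : ℂ)) / (p : ℂ))) :=
        fun j _ => (hsum _ (him2 z j hz)).of_norm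
      calc ∑ j ∈ Finset.range p, f ((z + (j : ℂ)) / (p : ℂ))
          = ∑ j ∈ Finset.range p, ∑' n : ℕ,
              a n * Complex.exp (2 * π * I * (n : ℂ) * ((z + (j : ℂ)) / (p : ℂ))) :=
            Finset.sum_congr rfl fun j _ => hf _ (him2 z j hz)
        _ = ∑' n : ℕ, ∑ j ∈ Finset.range p,
              a n * Complex.exp (2 * π * I * (n : ℂ) * ((z + (j : ℂ)) / (p : ℂ))) :=
            (Summable.tsum_finsetSum (f := fun (j : ℕ) (n : ℕ) =>
              a n * Complex.exp (2 * π * I * (n : ℂ) * ((z + (j : ℂ)) / (p : ℂ)))) hsum_j).symm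
        _ = ∑' n : ℕ, a n * Complex.exp (2 * π * I * (n : ℂ) * (z / (p : ℂ)))
              * (if p ∣ n then (p : ℂ) else 0) := by
            refine tsum_congr fun n => ?_
            rw [← zeta_sum p hp n, Finset.mul_sum]
            refine Finset.sum_congr rfl fun j _ => ?_
            have hsplit : (2 * (π:ℂ) * I * (n:ℂ) * ((z + (j:ℂ)) / (p:ℂ)))
                = (2 * (π:ℂ) * I * (n:ℂ) * (z / (p:ℂ))) + (j:ℂ) * (2 * (π:ℂ) * I * (n:ℂ) / (p:ℂ)) := by
              field_simp
            rw [hsplit, Complex.exp_add, Complex.exp_nat_mul]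
            ring
        _ = ∑' m : ℕ, (p : ℂ) * (a (p * m) * Complex.exp (2 * π * I * (m : ℂ) * z)) := by
            refine Eq.symm ?_
            refine Eq.trans (tsum_congr fun m => ?_) (Function.Injective.tsum_eq hinj ?_)
            · show (p : ℂ) * (a (p * m) * Complex.exp (2 * π * I * (m : ℂ) * z))
                = a (p * m) * Complex.exp (2 * π * I * ((p * m : ℕ) : ℂ) * (z / (p : ℂ)))
                  * (if p ∣ p * m then (p : ℂ) else 0)
              rw [if_pos (Dvd.intro m rfl), harg2]
              ring
            · intro m hm
              rcases em (p ∣ m) with ⟨q, rfl⟩ | hdvd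
              · exact ⟨q, rfl⟩
              · exfalso
                apply hm
                simp [hdvd]
        _ = (p : ℂ) * ∑' m : ℕ, a (p * m) * Complex.exp (2 * π * I * (m : ℂ) * z) :=
            tsum_mul_left
    rw [hstep, ← mul_assoc, hpow, ← tsum_mul_left]
  -- third piece
  have T3 : ∀ z : ℂ, 0 < z.im → a p * (p : ℂ) ^ (1 - (k : ℤ) / 2) * f z
      = ∑' m : ℕ, a p * (p : ℂ) ^ (1 - (k : ℤ) / 2)
          * (a m * Complex.exp (2 * π * I * (m : ℂ) * z)) := by
    intro z hz
    rw [hf z hz, ← tsum_mul_left]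
  -- the combined q-expansion identity
  have EQ : ∀ z : ℂ, 0 < z.im →
      (p : ℂ) ^ ((k : ℤ) / 2) * f ((p : ℂ) * z)
        + (p : ℂ) ^ ((k : ℤ) / 2 - k) * ∑ j ∈ Finset.range p, f ((z + (j : ℂ)) / (p : ℂ))
        - a p * (p : ℂ) ^ (1 - (k : ℤ) / 2) * f z
      = ∑' m : ℕ, c m * Complex.exp (2 * π * I * (m : ℂ) * z) := by
    intro z hz
    rw [T1 z hz, T2 z hz, T3 z hz,
      ← Summable.tsum_add (S1 z hz) ((S2 z hz).mul_left ((p : ℂ) ^ (1 - (k : ℤ) / 2))),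
      ← Summable.tsum_sub ((S1 z hz).add ((S2 z hz).mul_left ((p : ℂ) ^ (1 - (k : ℤ) / 2))))
        ((S3 z hz).mul_left (a p * (p : ℂ) ^ (1 - (k : ℤ) / 2)))]
    refine tsum_congr fun m => ?_
    simp only [hc]
    ring
  -- norm summability of the coefficient series
  have Snorm : ∀ z : ℂ, 0 < z.im →
      Summable fun m : ℕ => ‖c m * Complex.exp (2 * π * I * (m : ℂ) * z)‖ := by
    intro z hz
    have N1 : Summable fun m : ℕ => ‖(p : ℂ) ^ ((k : ℤ) / 2) * (if p ∣ m then a (m / p) else 0)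
        * Complex.exp (2 * π * I * (m : ℂ) * z)‖ := by
      refine (Function.Injective.summable_iff hinj ?_).mp ?_
      · intro m hm
        have hdvd : ¬ p ∣ m := fun ⟨q, hq⟩ => hm ⟨q, hq.symm⟩
        simp [hdvd]
      · refine ((hsum _ (him1 z hz)).mul_left ‖(p : ℂ) ^ ((k : ℤ) / 2)‖).congr fun n => ?_
        show ‖(p : ℂ) ^ ((k : ℤ) / 2)‖ * ‖a n * Complex.exp (2 * π * I * (n : ℂ) * ((p : ℂ) * z))‖
          = _
        rw [Function.comp_apply, hg1 n z]
        simp [norm_mul]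
    have N2 : Summable fun m : ℕ => ‖a (p * m) * Complex.exp (2 * π * I * (m : ℂ) * z)‖ := by
      refine ((hsum (z / (p : ℂ)) (him3 z hz)).comp_injective hinj).congr fun m => ?_
      simp only [Function.comp_apply]
      rw [harg2]
    have N3 : Summable fun m : ℕ => ‖a m * Complex.exp (2 * π * I * (m : ℂ) * z)‖ := hsum z hz
    refine Summable.of_nonneg_of_le (fun m => norm_nonneg _) (fun m => ?_)
      ((N1.add (N2.mul_left ‖(p : ℂ) ^ (1 - (k : ℤ) / 2)‖)).add
        (N3.mul_left ‖a p * (p : ℂ) ^ (1 - (k : ℤ) / 2)‖))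
    have hcm : c m * Complex.exp (2 * π * I * (m : ℂ) * z)
        = ((p : ℂ) ^ ((k : ℤ) / 2) * (if p ∣ m then a (m / p) else 0)
            * Complex.exp (2 * π * I * (m : ℂ) * z)
          + (p : ℂ) ^ (1 - (k : ℤ) / 2) * (a (p * m) * Complex.exp (2 * π * I * (m : ℂ) * z)))
          - a p * (p : ℂ) ^ (1 - (k : ℤ) / 2) * (a m * Complex.exp (2 * π * I * (m : ℂ) * z)) := by
      simp only [hc]
      ring
    rw [hcm]
    refine le_trans (norm_sub_le _ _) ?_
    refine add_le_add (le_trans (norm_add_le _ _) ?_) (le_of_eq (norm_mul _ _))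
    exact add_le_add le_rfl (le_of_eq (norm_mul _ _))
  -- relation between c and the recursion expression
  have hcast : (p : ℂ) ^ (k - 1 : ℕ) = (p : ℂ) ^ ((k : ℤ) - 1) := by
    rw [← zpow_natCast]
    congr 1
    omega
  have e3 : (p : ℂ) ^ ((k : ℤ) / 2) = (p : ℂ) ^ (1 - (k : ℤ) / 2) * (p : ℂ) ^ ((k : ℤ) - 1) := by
    rw [← zpow_add₀ hp0]
    congr 1
    omega
  have hrel : ∀ m : ℕ, c m = (p : ℂ) ^ (1 - (k : ℤ) / 2)
      * (a (p * m) - a p * a m + (p : ℂ) ^ (k - 1) * (if p ∣ m then a (m / p) else 0)) := by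
    intro m
    simp only [hc, hcast, e3]
    ring
  constructor
  · intro H n hn
    have hzero : ∀ m, c m = 0 :=
      coeff_unique c Snorm fun z hz => (EQ z hz).symm.trans (sub_eq_zero_of_eq (H z hz))
    have h := hzero n
    rw [hrel n] at h
    rcases mul_eq_zero.mp h with h1 | h2
    · exact absurd h1 (zpow_ne_zero _ hp0)
    · exact h2
  · intro H z hz
    have hzero : ∀ m, c m = 0 := by
      intro m
      rcases Nat.eq_zero_or_pos m with rfl | hm
      · rw [hrel 0]
        simp [ha0, Nat.zero_div]
      · rw [hrel m, H m hm, mul_zero]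
    have h0 : ∑' m : ℕ, c m * Complex.exp (2 * π * I * (m : ℂ) * z) = 0 :=
      (tsum_congr fun m => by rw [hzero m, zero_mul]).trans tsum_zero
    exact sub_eq_zero.mp ((EQ z hz).trans h0)
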